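/- Let O_C be the valuation ring of C, let O_C⟨T^{1/p^∞}⟩ denote the p-adic completion of the increasing union ⋃_{n≥0} O_C[T^{1/p^n}] of polynomial rings in the p-power roots of a variable T, and let C⟨T^{1/p^∞}⟩ = O_C⟨T^{1/p^∞}⟩[1/p]. Let a ∈ O_C satisfy |p| < |a|. Then the element 1 + aT admits no p-th root in C⟨T^{1/p^∞}⟩: there is no y ∈ C⟨T^{1/p^∞}⟩ with y^p = 1 + aT. -/

import Mathlib

set_option linter.unusedSectionVars false
set_option maxHeartbeats 1000000
open Fin.NatCast
/-- The exponent monoid `ℕ[1/p] = {m/pⁿ} ⊆ ℚ≥0` of the ring `O_C⟨T^{1/p^∞}⟩`. -/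
abbrev PadicFracExp (p : ℕ) : Type := {q : ℚ // 0 ≤ q ∧ ∃ n m : ℕ, q * (p : ℚ) ^ n = (m : ℚ)}

namespace NPR

section NA
open Filter
variable {C : Type*} [NormedField C] [IsUltrametricDist C]

lemma my_summable_of_tendsto_cofinite [CompleteSpace C] {ι : Type*} {f : ι → C}
    (h : Tendsto f cofinite (nhds 0)) : Summable f := by
  rw [summable_iff_vanishing_norm]
  intro ε hε
  have hfin : {i | ¬ ‖f i‖ < ε}.Finite := by
    have := Metric.tendsto_nhds.mp h ε hε
    simpa [dist_zero_right] using this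
  refine ⟨hfin.toFinset, fun t ht => ?_⟩
  rcases t.eq_empty_or_nonempty with rfl | hne
  · simpa using hε
  · have : Nonempty ι := ⟨hne.choose⟩
    obtain ⟨i, hit, hle⟩ := IsUltrametricDist.exists_norm_finset_sum_le t f
    refine lt_of_le_of_lt hle ?_
    have hi := hit hne
    have : i ∉ hfin.toFinset := Finset.disjoint_left.mp ht hi
    simpa [hfin.mem_toFinset] using this

lemma my_norm_tsum_le {ι : Type*} {f : ι → C} {B : ℝ} (hB : 0 ≤ B)
    (h : ∀ i, ‖f i‖ ≤ B) : ‖∑' i, f i‖ ≤ B :=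
  IsUltrametricDist.norm_tsum_le_of_forall_le_of_nonneg hB h

lemma my_norm_eq_of_close {x y : C} {e : ℝ} (h : ‖x + y‖ ≤ e) (hy : e < ‖y‖) :
    ‖x‖ = ‖y‖ := by
  have h1 : ‖x‖ ≤ ‖y‖ := by
    have hx : x = (x + y) + (-y) := by ring
    calc ‖x‖ = ‖(x+y) + (-y)‖ := by rw [← hx]
    _ ≤ max ‖x+y‖ ‖-y‖ := IsUltrametricDist.norm_add_le_max _ _
    _ ≤ ‖y‖ := by rw [norm_neg]; exact max_le (h.trans hy.le) le_rfl
  refine le_antisymm h1 ?_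
  by_contra hlt
  push_neg at hlt
  have h2 : ‖y‖ ≤ max ‖x+y‖ ‖x‖ := by
    have hx : y = (x + y) + (-x) := by ring
    calc ‖y‖ = ‖(x+y) + (-x)‖ := by rw [← hx]
    _ ≤ max ‖x+y‖ ‖-x‖ := IsUltrametricDist.norm_add_le_max _ _
    _ = max ‖x+y‖ ‖x‖ := by rw [norm_neg]
  exact lt_irrefl _ (lt_of_le_of_lt h2 (max_lt (lt_of_le_of_lt h hy) hlt))

end NA

section Shift
variable {p : ℕ} [NeZero p] {X : Type*}

def shiftF (v : Fin p → X) : Fin p → X := fun i => v (i + 1)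

lemma shiftF_iter (k : ℕ) (v : Fin p → X) (i : Fin p) :
    (shiftF^[k] v) i = v (i + (k : Fin p)) := by
  induction k generalizing v i with
  | zero => simp [shiftF]
  | succ n ih =>
    rw [Function.iterate_succ_apply, ih (shiftF v) i]
    show v ((i + (n : Fin p)) + 1) = _
    congr 1
    push_cast
    abel

lemma shiftF_p (v : Fin p → X) : shiftF^[p] v = v := by
  funext i
  rw [shiftF_iter]
  simp [Fin.natCast_self]

lemma shiftF_pmul (m : ℕ) (v : Fin p → X) : shiftF^[p * m] v = v := by
  rw [Function.iterate_mul]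
  exact Function.iterate_fixed (shiftF_p v) m

lemma shiftF_mod (k : ℕ) (v : Fin p → X) : shiftF^[k] v = shiftF^[k % p] v := by
  conv_lhs => rw [← Nat.div_add_mod k p]
  rw [Function.iterate_add_apply, shiftF_pmul]

lemma const_of_shiftF_fixed {v : Fin p → X} (h : shiftF v = v) (i j : Fin p) :
    v i = v j := by
  have key : ∀ k : ℕ, ∀ m : Fin p, v (m + (k : Fin p)) = v m := by
    intro k m
    rw [← shiftF_iter k v m, Function.iterate_fixed h k]
  have hj : v j = v (0 + (j.val : Fin p)) := by rw [zero_add, Fin.cast_val_eq_self]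
  have hi : v i = v (0 + (i.val : Fin p)) := by rw [zero_add, Fin.cast_val_eq_self]
  rw [hi, hj, key j.val 0, key i.val 0]

lemma shiftF_fixed_of_iter (hp : p.Prime) {v : Fin p → X} {j : ℕ} (hj0 : 0 < j)
    (hjp : j < p) (h : shiftF^[j] v = v) : shiftF v = v := by
  haveI : Fact p.Prime := ⟨hp⟩
  have hnd : ¬ p ∣ j := Nat.not_dvd_of_pos_of_lt hj0 hjp
  have hu : (j : ZMod p) ≠ 0 := by rwa [Ne, ZMod.natCast_eq_zero_iff]
  set x := ((j : ZMod p)⁻¹).val with hx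
  have hcast : ((x * j : ℕ) : ZMod p) = ((1 : ℕ) : ZMod p) := by
    push_cast
    rw [hx, ZMod.natCast_val, ZMod.cast_id]
    exact inv_mul_cancel₀ hu
  have hmod : (x * j) % p = 1 % p := (ZMod.natCast_eq_natCast_iff _ _ _).mp hcast
  have h1p : 1 % p = 1 := Nat.mod_eq_of_lt hp.one_lt
  have hfix : shiftF^[x * j] v = v := by
    rw [mul_comm, Function.iterate_mul]
    exact Function.iterate_fixed h x
  calc shiftF v = shiftF^[1] v := rfl
  _ = shiftF^[(x*j) % p] v := by rw [hmod, h1p]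
  _ = shiftF^[x*j] v := (shiftF_mod _ v).symm
  _ = v := hfix

end Shift

section Tup
variable {p : ℕ} [Fact p.Prime]

lemma pprime : p.Prime := Fact.out
lemma pQ0 : (p : ℚ) ≠ 0 := by
  exact_mod_cast (pprime (p := p)).ne_zero

instance : NeZero p := ⟨(pprime (p := p)).ne_zero⟩

def divP (q : PadicFracExp p) : PadicFracExp p :=
  ⟨q.1 / p, by
    obtain ⟨hq, n, m, h⟩ := q.2
    refine ⟨by positivity, n+1, m, ?_⟩
    rw [pow_succ]
    field_simp
    rw [mul_right_comm, mul_div_assoc, div_self (pQ0 (p := p)), mul_one, h]⟩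


def zeroE : PadicFracExp p := ⟨0, le_refl _, 0, 0, by norm_num⟩
def oneE : PadicFracExp p := ⟨1, by norm_num, 0, 1, by norm_num⟩
def invP (n : ℕ) : PadicFracExp p :=
  ⟨(p:ℚ)⁻¹ ^ n, by positivity, n, 1, by
    rw [inv_pow, inv_mul_cancel₀ (pow_ne_zero _ (pQ0 (p := p)))]; norm_num⟩

def mulP (q : PadicFracExp p) : PadicFracExp p :=
  ⟨q.1 * p, by
    obtain ⟨hq, n, m, h⟩ := q.2
    refine ⟨by positivity, n, m * p, ?_⟩
    push_cast
    rw [mul_right_comm, h]⟩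

@[simp] lemma divP_coe (q : PadicFracExp p) : ((divP q : PadicFracExp p) : ℚ) = q.1 / p := rfl
@[simp] lemma mulP_coe (q : PadicFracExp p) : ((mulP q : PadicFracExp p) : ℚ) = q.1 * p := rfl
@[simp] lemma zeroE_coe : ((zeroE : PadicFracExp p) : ℚ) = 0 := rfl
@[simp] lemma oneE_coe : ((oneE : PadicFracExp p) : ℚ) = 1 := rfl
@[simp] lemma invP_coe (n : ℕ) : ((invP n : PadicFracExp p) : ℚ) = (p:ℚ)⁻¹ ^ n := rfl

lemma divP_mulP (q : PadicFracExp p) : divP (mulP q) = q := by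
  refine Subtype.ext ?_
  show (q.1 * p) / p = q.1
  exact mul_div_cancel_right₀ _ (pQ0 (p := p))

lemma divP_invP (n : ℕ) : divP (invP n : PadicFracExp p) = invP (n+1) :=
  Subtype.ext (by simp [pow_succ, div_eq_mul_inv])

lemma divP_oneE : divP (oneE : PadicFracExp p) = invP 1 :=
  Subtype.ext (by simp [one_div])

abbrev Tup (p : ℕ) (q : PadicFracExp p) : Type :=
  {v : Fin p → PadicFracExp p // (∑ i, ((v i : ℚ))) = (q : ℚ)}

lemma sum_shiftF (v : Fin p → PadicFracExp p) :
    (∑ i, ((shiftF (p := p) v i).1)) = ∑ i, ((v i : ℚ)) :=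
  Fintype.sum_equiv (Equiv.addRight (1 : Fin p)) _ _ (fun _ => rfl)

def diagT (q : PadicFracExp p) : Tup p q :=
  ⟨fun _ => divP q, by
    rw [Finset.sum_const, Finset.card_univ, Fintype.card_fin, nsmul_eq_mul]
    show (p : ℚ) * (q.1 / p) = q.1
    rw [mul_comm, div_mul_cancel₀ _ (pQ0 (p := p))]⟩

def shiftT (q : PadicFracExp p) (v : Tup p q) : Tup p q :=
  ⟨shiftF v.1, by rw [sum_shiftF]; exact v.2⟩

lemma shiftT_iter_val (q : PadicFracExp p) (k : ℕ) (v : Tup p q) :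
    ((shiftT q)^[k] v).1 = shiftF^[k] v.1 := by
  induction k generalizing v with
  | zero => rfl
  | succ n ih =>
    rw [Function.iterate_succ_apply, Function.iterate_succ_apply, ih]
    rfl

lemma shiftT_p (q : PadicFracExp p) (v : Tup p q) : (shiftT q)^[p] v = v :=
  Subtype.ext (by rw [shiftT_iter_val]; exact shiftF_p _)

lemma shiftT_mod (q : PadicFracExp p) (k : ℕ) (v : Tup p q) :
    (shiftT q)^[k] v = (shiftT q)^[k % p] v :=
  Subtype.ext (by rw [shiftT_iter_val, shiftT_iter_val]; exact shiftF_mod k v.1)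

def sameOrbit (q : PadicFracExp p) (v w : Tup p q) : Prop :=
  ∃ k : ℕ, (shiftT q)^[k] v = w

lemma sameOrbit_refl (q : PadicFracExp p) (v : Tup p q) : sameOrbit q v v := ⟨0, rfl⟩

lemma sameOrbit_trans {q : PadicFracExp p} {u v w : Tup p q}
    (h1 : sameOrbit q u v) (h2 : sameOrbit q v w) : sameOrbit q u w := by
  obtain ⟨k, rfl⟩ := h1
  obtain ⟨k', rfl⟩ := h2
  exact ⟨k' + k, (Function.iterate_add_apply _ k' k u)⟩

lemma sameOrbit_symm {q : PadicFracExp p} {v w : Tup p q}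
    (h : sameOrbit q v w) : sameOrbit q w v := by
  obtain ⟨k, rfl⟩ := h
  refine ⟨p - k % p, ?_⟩
  rw [shiftT_mod q k v, ← Function.iterate_add_apply]
  have hle : k % p ≤ p := (Nat.mod_lt _ (Nat.pos_of_ne_zero (NeZero.ne p))).le
  rw [Nat.sub_add_cancel hle]
  exact shiftT_p q v

lemma eq_diagT_of_const {q : PadicFracExp p} {v : Tup p q}
    (h : ∀ i j : Fin p, v.1 i = v.1 j) : v = diagT q := by
  have hp0 : 0 < p := Nat.pos_of_ne_zero (NeZero.ne p)
  refine Subtype.ext (funext fun i => ?_)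
  have hsum := v.2
  have hall : ∀ j : Fin p, ((v.1 j : ℚ)) = ((v.1 i : ℚ)) := fun j => by rw [h j i]
  rw [Finset.sum_congr rfl (fun j _ => hall j), Finset.sum_const, Finset.card_univ,
    Fintype.card_fin, nsmul_eq_mul] at hsum
  refine Subtype.ext ?_
  show (v.1 i : ℚ) = q.1 / p
  field_simp
  rw [mul_comm]
  exact hsum

lemma prod_shiftF {C : Type*} [CommMonoid C] (c : PadicFracExp p → C)
    (v : Fin p → PadicFracExp p) :
    (∏ i, c (shiftF (p := p) v i)) = ∏ i, c (v i) :=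
  Fintype.prod_equiv (Equiv.addRight (1 : Fin p)) _ _ (fun _ => rfl)

end Tup

section Decomp
variable {p : ℕ} [Fact p.Prime] {C : Type*} [NormedField C] [CompleteSpace C]

lemma fix_iterate {α : Type*} (f : α → α) {d : α} (hfix : f d = d) {n : ℕ}
    (hn : 0 < n) {v : α} (h : f v = d) : f^[n] v = d := by
  induction n with
  | zero => omega
  | succ m _ =>
    rw [Function.iterate_succ_apply, h]
    exact Function.iterate_fixed hfix m

/-- Orbit decomposition of the convolution sum. -/
lemma decomp (c : PadicFracExp p → C) (q : PadicFracExp p)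
    (hsum : Summable (fun v : Tup p q => ∏ i, c (v.1 i))) :
    ∃ (Q : Type) (rep : Q → Tup p q),
      Summable (fun o : Q => ∏ i, c ((rep o).1 i)) ∧
      ((∑' v : Tup p q, ∏ i, c (v.1 i))
        = (∏ i, c ((diagT q).1 i)) + (p : C) * ∑' o : Q, ∏ i, c ((rep o).1 i)) ∧
      (∀ o, rep o ≠ diagT q) ∧
      (∀ o o', sameOrbit q (rep o) (rep o') → o = o') ∧
      (∀ v : Tup p q, v ≠ diagT q → ∃ o, sameOrbit q v (rep o)) := by
  classical
  have hp : p.Prime := Fact.out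
  have hp0 : 0 < p := hp.pos
  set F : Tup p q → C := fun v => ∏ i, c (v.1 i) with hF
  -- F is invariant under the shift
  have hFshift : ∀ v : Tup p q, F (shiftT q v) = F v := fun v => prod_shiftF c v.1
  have hFiter : ∀ (k : ℕ) (v : Tup p q), F ((shiftT q)^[k] v) = F v := by
    intro k
    induction k with
    | zero => intro v; rfl
    | succ n ih =>
      intro v
      rw [Function.iterate_succ_apply, ih (shiftT q v), hFshift]
  have hFsO : ∀ {v w : Tup p q}, sameOrbit q v w → F v = F w := by
    rintro v w ⟨k, rfl⟩
    exact (hFiter k v).symm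
  -- the subtype of non-diagonal tuples
  set A := {v : Tup p q // v ≠ diagT q} with hA
  have hdiag_shift : ∀ v : Tup p q, shiftT q v = diagT q → v = diagT q := by
    intro v h
    have h2 : (shiftT q)^[p] v = v := shiftT_p q v
    have hfix : shiftT q (diagT q) = diagT q := Subtype.ext rfl
    have h3 : (shiftT q)^[p] v = diagT q := fix_iterate _ hfix hp0 h
    rw [← h2, h3]
  let sA : A → A := fun v => ⟨shiftT q v.1, fun h => v.2 (hdiag_shift _ h)⟩
  have sA_iter_val : ∀ (k : ℕ) (v : A), (sA^[k] v).1 = (shiftT q)^[k] v.1 := by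
    intro k
    induction k with
    | zero => intro v; rfl
    | succ n ih =>
      intro v
      rw [Function.iterate_succ_apply, Function.iterate_succ_apply, ih]
  have hfree : ∀ (v : A) (j : ℕ), 0 < j → j < p → sA^[j] v = v → False := by
    intro v j hj0 hjp h
    have h1 : (shiftT q)^[j] v.1 = v.1 := by rw [← sA_iter_val, h]
    have h2 : shiftF^[j] (v.1).1 = (v.1).1 := by
      rw [← shiftT_iter_val, h1]
    have h3 := shiftF_fixed_of_iter hp hj0 hjp h2
    exact v.2 (eq_diagT_of_const (const_of_shiftF_fixed h3))
  letI sa : Setoid A :=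
    ⟨fun v w => sameOrbit q v.1 w.1,
     ⟨fun v => sameOrbit_refl q v.1, sameOrbit_symm, sameOrbit_trans⟩⟩
  let Q := Quotient sa
  let rep : Q → Tup p q := fun o => o.out.1
  have sA_p : ∀ v : A, sA^[p] v = v := by
    intro v
    refine Subtype.ext ?_
    rw [sA_iter_val]
    exact shiftT_p q v.1
  have sA_mod : ∀ (k : ℕ) (v : A), sA^[k] v = sA^[k % p] v := by
    intro k v
    refine Subtype.ext ?_
    rw [sA_iter_val, sA_iter_val]
    exact shiftT_mod q k v.1
  -- the equivalence 〈Fin p × Q〉 ≃ A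
  let Φ : Fin p × Q → A := fun ko => sA^[ko.1.val] ko.2.out
  have hΦinj : Function.Injective Φ := by
    rintro ⟨k, o⟩ ⟨k', o'⟩ h
    simp only [Φ] at h
    have hoo : o = o' := by
      refine Quotient.out_equiv_out.mp ?_
      have h1 : sameOrbit q o.out.1 (sA^[k.val] o.out).1 := by
        rw [sA_iter_val]; exact ⟨k.val, rfl⟩
      have h2 : sameOrbit q o'.out.1 (sA^[k'.val] o'.out).1 := by
        rw [sA_iter_val]; exact ⟨k'.val, rfl⟩
      rw [h] at h1
      exact sameOrbit_trans h1 (sameOrbit_symm h2)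
    subst hoo
    suffices hk : k = k' by rw [hk]
    have key : ∀ (m m' : ℕ), m ≤ m' → m' < p → sA^[m] o.out = sA^[m'] o.out → m = m' := by
      intro m m' hle hlt heq
      by_contra hne
      have hmm : m < m' := lt_of_le_of_ne hle hne
      have hj0 : 0 < p - m' + m := by omega
      have hjp : p - m' + m < p := by omega
      refine hfree o.out (p - m' + m) hj0 hjp ?_
      calc sA^[p - m' + m] o.out = sA^[p - m']  (sA^[m] o.out) :=
            Function.iterate_add_apply _ _ _ _
      _ = sA^[p - m'] (sA^[m'] o.out) := by rw [heq]
      _ = sA^[p - m' + m'] o.out := (Function.iterate_add_apply _ _ _ _).symm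
      _ = sA^[p] o.out := by rw [Nat.sub_add_cancel hlt.le]
      _ = o.out := sA_p o.out
    rcases le_total k.val k'.val with hle | hle
    · exact Fin.ext (key k.val k'.val hle k'.isLt h)
    · exact (Fin.ext (key k'.val k.val hle k.isLt h.symm)).symm
  have hΦsurj : Function.Surjective Φ := by
    intro v
    obtain ⟨k, hk⟩ : sameOrbit q (Quotient.mk sa v).out.1 v.1 := Quotient.mk_out v
    refine ⟨⟨⟨k % p, Nat.mod_lt _ hp0⟩, Quotient.mk sa v⟩, ?_⟩
    show sA^[k % p] (Quotient.mk sa v).out = v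
    rw [← sA_mod]
    refine Subtype.ext ?_
    rw [sA_iter_val]
    exact hk
  let Φe : (Fin p × Q) ≃ A := Equiv.ofBijective Φ ⟨hΦinj, hΦsurj⟩
  have hAsum : Summable (fun v : A => F v.1) := by
    have := hsum.subtype {v : Tup p q | v ≠ diagT q}
    exact this
  have hΦsum : Summable (fun ko : Fin p × Q => F (Φe ko).1) :=
    (Φe.summable_iff (f := fun v : A => F v.1)).mpr hAsum
  have hΦval : ∀ ko : Fin p × Q, F (Φe ko).1 = F (rep ko.2) := by
    rintro ⟨k, o⟩
    show F (sA^[k.val] o.out).1 = F o.out.1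
    rw [sA_iter_val]
    exact hFiter k.val o.out.1
  have hΦsum' : Summable (fun ko : Fin p × Q => F (rep ko.2)) :=
    (summable_congr hΦval).mp hΦsum
  have hQinj : Function.Injective (fun o : Q => (((0 : Fin p), o) : Fin p × Q)) :=
    fun o o' h => (Prod.ext_iff.mp h).2
  have hQsum : Summable (fun o : Q => F (rep o)) := by
    have := hΦsum'.comp_injective hQinj
    exact this
  refine ⟨Q, rep, hQsum, ?_, fun o => o.out.2, ?_, ?_⟩
  · -- the tsum identity
    have step1 : (∑' v : Tup p q, F v) = F (diagT q) +
        ∑' v : Tup p q, if v = diagT q then 0 else F v :=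
      hsum.tsum_eq_add_tsum_ite (diagT q)
    have step2 : (∑' v : Tup p q, if v = diagT q then 0 else F v)
        = ∑' v : A, F v.1 := by
      calc (∑' v : Tup p q, if v = diagT q then 0 else F v)
          = ∑' v : Tup p q, Set.indicator {w : Tup p q | w ≠ diagT q} F v :=
            tsum_congr (fun v => by
              by_cases h : v = diagT q <;> simp [Set.indicator_apply, h])
      _ = ∑' (v : ↥{w : Tup p q | w ≠ diagT q}), F v.1 := (tsum_subtype _ _).symm
      _ = ∑' v : A, F v.1 := rfl
    have step3 : (∑' v : A, F v.1) = ∑' ko : Fin p × Q, F (Φe ko).1 :=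
      (Φe.tsum_eq (fun v : A => F v.1)).symm
    have step4 : (∑' ko : Fin p × Q, F (Φe ko).1) = (p : C) * ∑' o : Q, F (rep o) := by
      calc (∑' ko : Fin p × Q, F (Φe ko).1)
          = ∑' ko : Fin p × Q, F (rep ko.2) := tsum_congr hΦval
      _ = ∑' (k : Fin p), ∑' (o : Q), F (rep o) := hΦsum'.tsum_prod' (fun _ => hQsum)
      _ = ∑ _k : Fin p, ∑' (o : Q), F (rep o) := tsum_fintype _
      _ = (p : C) * ∑' o : Q, F (rep o) := by
          rw [Finset.sum_const, Finset.card_univ, Fintype.card_fin, nsmul_eq_mul]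
    rw [step1, step2, step3, step4]
  · intro o o' h
    exact Quotient.out_equiv_out.mp h
  · intro v hv
    refine ⟨Quotient.mk sa ⟨v, hv⟩, sameOrbit_symm ?_⟩
    exact Quotient.mk_out (⟨v, hv⟩ : A)

lemma prod_shiftT_iter {C : Type*} [CommMonoid C] (c : PadicFracExp p → C)
    {q : PadicFracExp p} (k : ℕ) (v : Tup p q) :
    (∏ i, c (((shiftT q)^[k] v).1 i)) = ∏ i, c (v.1 i) := by
  induction k generalizing v with
  | zero => rfl
  | succ n ih =>
    rw [Function.iterate_succ_apply, ih (shiftT q v)]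
    exact prod_shiftF c v.1

lemma prod_sameOrbit {C : Type*} [CommMonoid C] (c : PadicFracExp p → C)
    {q : PadicFracExp p} {v w : Tup p q} (h : sameOrbit q v w) :
    (∏ i, c (w.1 i)) = ∏ i, c (v.1 i) := by
  obtain ⟨k, rfl⟩ := h
  exact prod_shiftT_iter c k v

lemma conv_tendsto (c : PadicFracExp p → C) (hc : Filter.Tendsto c Filter.cofinite (nhds 0))
    {M : ℝ} (hM1 : 1 ≤ M) (hMb : ∀ r, ‖c r‖ ≤ M) (q : PadicFracExp p) :
    Filter.Tendsto (fun v : Tup p q => ∏ i, c (v.1 i)) Filter.cofinite (nhds 0) := by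
  have hp0 : 0 < p := (pprime (p := p)).pos
  rw [Metric.tendsto_nhds]
  intro ε hε
  rw [Filter.eventually_cofinite]
  have hMpos : (0:ℝ) < M ^ (p - 1) := pow_pos (lt_of_lt_of_le one_pos hM1) _
  set δ : ℝ := ε / M ^ (p - 1) with hδ
  have hδpos : 0 < δ := div_pos hε hMpos
  have hF : {r : PadicFracExp p | ¬ dist (c r) 0 < δ}.Finite := by
    have := Metric.tendsto_nhds.mp hc δ hδpos
    rwa [Filter.eventually_cofinite] at this
  set F : Set (PadicFracExp p) := {r | ¬ dist (c r) 0 < δ} with hFdef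
  have hpi : {g : Fin p → PadicFracExp p | ∀ i, g i ∈ F}.Finite := by
    refine Set.Finite.subset (Set.Finite.pi (fun _ : Fin p => hF)) ?_
    intro g hg
    rw [Set.mem_pi]
    exact fun i _ => hg i
  have hfin : {v : Tup p q | ∀ i, v.1 i ∈ F}.Finite := by
    have : {v : Tup p q | ∀ i, v.1 i ∈ F}
        = Subtype.val ⁻¹' {g : Fin p → PadicFracExp p | ∀ i, g i ∈ F} := rfl
    rw [this]
    exact Set.Finite.preimage (Subtype.val_injective.injOn) hpi
  refine hfin.subset ?_
  intro v hv
  simp only [Set.mem_setOf_eq] at hv ⊢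
  by_contra hcon
  push_neg at hcon
  obtain ⟨i₀, hi₀⟩ := hcon
  apply hv
  rw [dist_zero_right]
  have hnorm : ‖∏ i, c (v.1 i)‖ = ∏ i, ‖c (v.1 i)‖ := norm_prod _ _
  rw [hnorm]
  have hsplit : (∏ i, ‖c (v.1 i)‖)
      = ‖c (v.1 i₀)‖ * ∏ i ∈ Finset.univ.erase i₀, ‖c (v.1 i)‖ :=
    (Finset.mul_prod_erase Finset.univ _ (Finset.mem_univ i₀)).symm
  rw [hsplit]
  have hrest : (∏ i ∈ Finset.univ.erase i₀, ‖c (v.1 i)‖) ≤ M ^ (p - 1) := by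
    have h1 : (∏ i ∈ Finset.univ.erase i₀, ‖c (v.1 i)‖)
        ≤ ∏ _i ∈ Finset.univ.erase i₀, M :=
      Finset.prod_le_prod (fun i _ => norm_nonneg _) (fun i _ => hMb _)
    rwa [Finset.prod_const, Finset.card_erase_of_mem (Finset.mem_univ i₀),
      Finset.card_univ, Fintype.card_fin] at h1
  have hi₀' : ‖c (v.1 i₀)‖ < δ := by
    have := hi₀
    rw [hFdef] at this
    simp only [Set.mem_setOf_eq, not_not] at this
    rwa [dist_zero_right] at this
  calc ‖c (v.1 i₀)‖ * ∏ i ∈ Finset.univ.erase i₀, ‖c (v.1 i)‖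
      ≤ ‖c (v.1 i₀)‖ * M ^ (p - 1) :=
        mul_le_mul_of_nonneg_left hrest (norm_nonneg _)
  _ < δ * M ^ (p - 1) := mul_lt_mul_of_pos_right hi₀' hMpos
  _ = ε := div_mul_cancel₀ _ (ne_of_gt hMpos)

end Decomp
end NPR

/-- Let `C = ℂ_p` (formalized as a complete algebraically closed
nonarchimedean normed field with an isometric embedding of `ℚ_p`) and let `a ∈ O_C`
with `|p| < |a|`.  Then `1 + aT` has no `p`-th root in `C⟨T^{1/p^∞}⟩`.  An element of
`C⟨T^{1/p^∞}⟩` (the `p`-adic completion of `⋃ₙ O_C[T^{1/pⁿ}]`, with `p` inverted) is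
encoded by its coefficient family `y : ℕ[1/p] → C`, which tends to `0` with respect to
the cofinite filter; the coefficient of `T^q` in `y^p` is the `p`-fold convolution
`∑ y_{q₁} ⋯ y_{q_p}` over tuples with `q₁ + ⋯ + q_p = q`, and the coefficients of
`1 + aT` are `1` at `q = 0` and `a` at `q = 1`. -/
theorem no_pth_root_of_one_add_aT
    {p : ℕ} [Fact p.Prime]
    (C : Type*) [NormedField C] [CompleteSpace C] [IsUltrametricDist C]
    [IsAlgClosed C] [Algebra ℚ_[p] C]
    (hisom : ∀ q : ℚ_[p], ‖algebraMap ℚ_[p] C q‖ = ‖q‖)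
    (a : C) (ha : ‖a‖ ≤ 1) (hpa : ‖(p : C)‖ < ‖a‖) :
    ¬ ∃ y : PadicFracExp p → C,
        Filter.Tendsto y Filter.cofinite (nhds 0) ∧
        ∀ q : PadicFracExp p,
          (∑' v : {v : Fin p → PadicFracExp p // (∑ i, ((v i : ℚ))) = (q : ℚ)},
              ∏ i, y (v.1 i))
            = (if (q : ℚ) = 0 then 1 else 0) + (if (q : ℚ) = 1 then a else 0) := by
  classical
  rintro ⟨y, hy, hconv⟩
  have hp : p.Prime := Fact.out
  have hp0 : 0 < p := hp.pos
  have hp1 : 1 < p := hp.one_lt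
  have hpne : p ≠ 0 := hp.ne_zero
  set np : ℝ := ‖(p : C)‖ with hnpdef
  have hnp : np = (p : ℝ)⁻¹ := by
    rw [hnpdef, show ((p : ℕ) : C) = algebraMap ℚ_[p] C ((p : ℕ) : ℚ_[p]) from (map_natCast _ p).symm,
      hisom, Padic.norm_p]
  have hpR1 : (1:ℝ) < (p:ℝ) := by exact_mod_cast hp1
  have hnp0 : 0 < np := by rw [hnp]; positivity
  have hnp1 : np < 1 := by rw [hnp]; exact inv_lt_one_of_one_lt₀ hpR1
  have ha0 : 0 < ‖a‖ := hnp0.trans hpa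
  -- the set of coefficient norms is bounded above
  have hfin1 : {r : PadicFracExp p | ¬ ‖y r‖ < 1}.Finite := by
    have := Metric.tendsto_nhds.mp hy 1 one_pos
    simpa [dist_zero_right] using this
  obtain ⟨B, hB⟩ := (hfin1.image (fun r => ‖y r‖)).bddAbove
  have hbd : ∀ r, ‖y r‖ ≤ max B 1 := by
    intro r
    by_cases h : ‖y r‖ < 1
    · exact le_max_of_le_right h.le
    · exact le_max_of_le_left (hB ⟨r, h, rfl⟩)
  have hbddAbove : BddAbove (Set.range fun r : PadicFracExp p => ‖y r‖) := by
    refine ⟨max B 1, ?_⟩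
    rintro x ⟨r, rfl⟩
    exact hbd r
  set M : ℝ := sSup (Set.range fun r : PadicFracExp p => ‖y r‖) with hMdef
  have hMle : ∀ r, ‖y r‖ ≤ M := fun r => le_csSup hbddAbove ⟨r, rfl⟩
  -- the constant coefficient
  have hdz : NPR.divP (NPR.zeroE : PadicFracExp p) = NPR.zeroE := Subtype.ext (zero_div _)
  haveI hTu : Unique (NPR.Tup p (NPR.zeroE : PadicFracExp p)) := by
    refine ⟨⟨NPR.diagT NPR.zeroE⟩, ?_⟩
    intro v
    refine Subtype.ext (funext fun i => ?_)
    have hs := v.2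
    have h0 : ∀ j : Fin p, ((v.1 j : ℚ)) = 0 := by
      have := (Finset.sum_eq_zero_iff_of_nonneg (fun j _ => (v.1 j).2.1)).mp hs
      exact fun j => this j (Finset.mem_univ j)
    refine Subtype.ext ?_
    show ((v.1 i : ℚ)) = ((NPR.divP (NPR.zeroE : PadicFracExp p) : PadicFracExp p) : ℚ)
    rw [h0 i]
    rw [hdz]
    rfl
  have hzero : y NPR.zeroE ^ p = 1 := by
    have h := hconv NPR.zeroE
    have hL : (∑' v : NPR.Tup p (NPR.zeroE : PadicFracExp p), ∏ i, y (v.1 i))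
        = ∏ i, y ((NPR.diagT (NPR.zeroE : PadicFracExp p)).1 i) := by
      refine tsum_eq_single _ ?_
      intro b' hb'
      exact absurd (Subsingleton.elim b' _) hb'
    rw [hL] at h
    have hD : (∏ i, y ((NPR.diagT (NPR.zeroE : PadicFracExp p)).1 i)) = y NPR.zeroE ^ p := by
      have : ∀ i : Fin p, (NPR.diagT (NPR.zeroE : PadicFracExp p)).1 i = NPR.zeroE := fun i => hdz
      rw [Finset.prod_congr rfl (fun i _ => by rw [this i])]
      rw [Finset.prod_const, Finset.card_univ, Fintype.card_fin]
    rw [hD] at h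
    rw [h]
    norm_num [NPR.zeroE]
  have hynorm0 : ‖y NPR.zeroE‖ = 1 := by
    have h1 : ‖y NPR.zeroE‖ ^ p = 1 := by
      rw [← norm_pow, hzero, norm_one]
    rcases lt_trichotomy ‖y NPR.zeroE‖ 1 with h | h | h
    · exfalso
      have := pow_lt_one₀ (norm_nonneg _) h hpne
      rw [h1] at this; exact lt_irrefl _ this
    · exact h
    · exfalso
      have := one_lt_pow₀ h hpne
      rw [h1] at this; exact lt_irrefl _ this
  have hM1 : 1 ≤ M := hynorm0 ▸ hMle NPR.zeroE
  have hMpos : 0 < M := lt_of_lt_of_le one_pos hM1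
  have hM0 : 0 ≤ M := hMpos.le
  -- summability of convolution families
  have hsum : ∀ q : PadicFracExp p, Summable (fun v : NPR.Tup p q => ∏ i, y (v.1 i)) :=
    fun q => NPR.my_summable_of_tendsto_cofinite (NPR.conv_tendsto y hy hM1 hMle q)
  -- right-hand side
  set R : PadicFracExp p → C :=
    fun q => (if (q : ℚ) = 0 then 1 else 0) + (if (q : ℚ) = 1 then a else 0) with hRdef
  have hRnorm : ∀ q, ‖R q‖ ≤ 1 := by
    intro q
    by_cases h0 : (q : ℚ) = 0 <;> by_cases h1 : (q : ℚ) = 1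
    · exfalso; rw [h0] at h1; norm_num at h1
    · simp [hRdef, h0, h1]
    · simp [hRdef, h0, h1, ha]
    · simp [hRdef, h0, h1]
  -- per-tuple bound by M^p
  have htupM : ∀ (q : PadicFracExp p) (v : NPR.Tup p q), ‖∏ i, y (v.1 i)‖ ≤ M ^ p := by
    intro q v
    rw [norm_prod]
    have h1 : (∏ i, ‖y (v.1 i)‖) ≤ ∏ _i : Fin p, M :=
      Finset.prod_le_prod (fun i _ => norm_nonneg _) (fun i _ => hMle _)
    rwa [Finset.prod_const, Finset.card_univ, Fintype.card_fin] at h1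
  -- KEY ESTIMATE E1
  have E1 : ∀ (q : PadicFracExp p) (B : ℝ), 0 ≤ B →
      (∀ v : NPR.Tup p q, v ≠ NPR.diagT q → ‖∏ i, y (v.1 i)‖ ≤ B) →
      ‖y (NPR.divP q) ^ p - R q‖ ≤ np * B := by
    intro q B hB hbv
    obtain ⟨Q, rep, hQsum, htsum, hrepne, hrepinj, hrepsur⟩ := NPR.decomp y q (hsum q)
    have hdiagval : (∏ i, y ((NPR.diagT q).1 i)) = y (NPR.divP q) ^ p := by
      calc (∏ i, y ((NPR.diagT q).1 i)) = ∏ _i : Fin p, y (NPR.divP q) := rfl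
      _ = y (NPR.divP q) ^ p := by
          rw [Finset.prod_const, Finset.card_univ, Fintype.card_fin]
    rw [hconv q, hdiagval] at htsum
    have hre : y (NPR.divP q) ^ p - R q
        = -((p:C) * ∑' o : Q, ∏ i, y ((rep o).1 i)) := by
      simp only [hRdef]
      rw [htsum]; ring
    rw [hre, norm_neg, norm_mul]
    exact mul_le_mul_of_nonneg_left
      (NPR.my_norm_tsum_le hB (fun o => hbv (rep o) (hrepne o))) (norm_nonneg _)
  -- M ≤ 1
  set b : ℝ := np ^ ((p:ℝ)⁻¹) with hbdef
  have hb0 : 0 ≤ b := Real.rpow_nonneg hnp0.le _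
  have hbp : b ^ p = np := by
    rw [hbdef, ← Real.rpow_natCast (np ^ ((p:ℝ)⁻¹)) p, ← Real.rpow_mul hnp0.le,
      inv_mul_cancel₀ (by positivity : (p:ℝ) ≠ 0), Real.rpow_one]
  have hb1 : b < 1 := Real.rpow_lt_one hnp0.le hnp1 (by positivity)
  have hcoefM : ∀ r : PadicFracExp p, ‖y r‖ ^ p ≤ max (np * M ^ p) 1 := by
    intro r
    have h := E1 (NPR.mulP r) (M ^ p) (by positivity) (fun v _ => htupM _ v)
    rw [NPR.divP_mulP] at h
    calc ‖y r‖ ^ p = ‖y r ^ p‖ := (norm_pow _ _).symm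
    _ = ‖(y r ^ p - R (NPR.mulP r)) + R (NPR.mulP r)‖ := by ring_nf
    _ ≤ max ‖y r ^ p - R (NPR.mulP r)‖ ‖R (NPR.mulP r)‖ :=
        IsUltrametricDist.norm_add_le_max _ _
    _ ≤ max (np * M ^ p) 1 := max_le_max h (hRnorm _)
  have hMle1 : M ≤ 1 := by
    have hstep : ∀ r : PadicFracExp p, ‖y r‖ ≤ max (b * M) 1 := by
      intro r
      by_contra hcon
      push_neg at hcon
      have hmax0 : 0 ≤ max (b * M) 1 := le_max_of_le_right zero_le_one
      have hpow := pow_lt_pow_left₀ hcon hmax0 hpne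
      have hhi : max (b * M) 1 ^ p = max (np * M ^ p) 1 := by
        rcases le_total (b * M) 1 with hle | hle
        · rw [max_eq_right hle, one_pow, max_eq_right]
          calc np * M ^ p = (b * M) ^ p := by rw [mul_pow, hbp]
          _ ≤ 1 ^ p := pow_le_pow_left₀ (by positivity) hle p
          _ = 1 := one_pow p
        · rw [max_eq_left hle, max_eq_left, mul_pow, hbp]
          calc (1:ℝ) = 1 ^ p := (one_pow p).symm
          _ ≤ (b * M) ^ p := pow_le_pow_left₀ zero_le_one hle p
          _ = np * M ^ p := by rw [mul_pow, hbp]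
      rw [hhi] at hpow
      exact absurd (hcoefM r) (not_le.mpr hpow)
    have hsup : M ≤ max (b * M) 1 := by
      refine csSup_le ⟨‖y NPR.zeroE‖, ⟨NPR.zeroE, rfl⟩⟩ ?_
      rintro x ⟨r, rfl⟩
      exact hstep r
    rcases le_max_iff.mp hsup with h | h
    · exfalso
      have : M < M := lt_of_le_of_lt h (by
        calc b * M < 1 * M := mul_lt_mul_of_pos_right hb1 hMpos
        _ = M := one_mul M)
      exact lt_irrefl _ this
    · exact h
  have hyle1 : ∀ r, ‖y r‖ ≤ 1 := fun r => (hMle r).trans hMle1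
  have hMp1 : M ^ p ≤ 1 := pow_le_one₀ hM0 hMle1
  -- refined coefficient bound
  have hcb : ∀ r : PadicFracExp p, (r : ℚ) ≠ 0 → ((r : ℚ)) * p ≠ 1 → ‖y r‖ ≤ b := by
    intro r hr0 hr1
    have h := E1 (NPR.mulP r) (M ^ p) (by positivity) (fun v _ => htupM _ v)
    rw [NPR.divP_mulP] at h
    have hR0 : R (NPR.mulP r) = 0 := by
      have hc : ((NPR.mulP r : PadicFracExp p) : ℚ) = (r : ℚ) * p := rfl
      have h0 : ((NPR.mulP r : PadicFracExp p) : ℚ) ≠ 0 := by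
        rw [hc]
        exact fun hh => hr0 (by
          rcases mul_eq_zero.mp hh with h | h
          · exact h
          · exact absurd h (by exact_mod_cast hpne))
      have h1 : ((NPR.mulP r : PadicFracExp p) : ℚ) ≠ 1 := by rw [hc]; exact hr1
      simp only [hRdef]
      rw [if_neg h0, if_neg h1, add_zero]
    rw [hR0, sub_zero, norm_pow] at h
    have hle : ‖y r‖ ^ p ≤ b ^ p := by
      rw [hbp]
      calc ‖y r‖ ^ p ≤ np * M ^ p := h
      _ ≤ np * 1 := mul_le_mul_of_nonneg_left hMp1 hnp0.le
      _ = np := mul_one np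
    by_contra hcon
    push_neg at hcon
    exact absurd hle (not_le.mpr (pow_lt_pow_left₀ hcon hb0 hpne))
  -- first step of the chain
  have hinv1 : ‖y (NPR.invP 1)‖ ^ p = ‖a‖ := by
    have h := E1 NPR.oneE (M ^ p) (by positivity) (fun v _ => htupM _ v)
    have hRone : R (NPR.oneE : PadicFracExp p) = a := by
      have h0 : ((NPR.oneE : PadicFracExp p) : ℚ) = 1 := rfl
      simp [hRdef, h0]
    rw [hRone, NPR.divP_oneE] at h
    have hlt : np * M ^ p < ‖a‖ := by
      calc np * M ^ p ≤ np * 1 := mul_le_mul_of_nonneg_left hMp1 hnp0.le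
      _ = np := mul_one np
      _ < ‖a‖ := hpa
    have := NPR.my_norm_eq_of_close (x := y (NPR.invP 1) ^ p) (y := -a)
      (e := np * M ^ p) (by rw [← sub_eq_add_neg]; exact h) (by rw [norm_neg]; exact hlt)
    rw [norm_neg, norm_pow] at this
    exact this
  -- KEY ESTIMATE E2 (refined, for 0 < q ≤ 1/p)
  have hqp0 : (0:ℚ) < (p:ℚ) := by exact_mod_cast hp0
  have E2 : ∀ q : PadicFracExp p, 0 < (q : ℚ) → (q : ℚ) ≤ (p:ℚ)⁻¹ →
      ‖y (NPR.divP q) ^ p + (p:C) * (y q * y NPR.zeroE ^ (p-1))‖ ≤ np * (b * b) := by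
    intro q hq0 hqle
    obtain ⟨Q, rep, hQsum, htsum, hrepne, hrepinj, hrepsur⟩ := NPR.decomp y q (hsum q)
    have hdiagval : (∏ i, y ((NPR.diagT q).1 i)) = y (NPR.divP q) ^ p := by
      calc (∏ i, y ((NPR.diagT q).1 i)) = ∏ _i : Fin p, y (NPR.divP q) := rfl
      _ = y (NPR.divP q) ^ p := by
          rw [Finset.prod_const, Finset.card_univ, Fintype.card_fin]
    set i0 : Fin p := (0 : Fin p) with hi0def
    set w0fun : Fin p → PadicFracExp p :=
      fun i => if i = i0 then q else NPR.zeroE with hw0f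
    have hw0sum : (∑ i, ((w0fun i : ℚ))) = (q : ℚ) := by
      have hcoe : ∀ i : Fin p, ((w0fun i : ℚ)) = if i = i0 then (q:ℚ) else 0 := by
        intro i; by_cases h : i = i0 <;> simp [hw0f, h, NPR.zeroE]
      rw [Finset.sum_congr rfl (fun i _ => hcoe i)]
      simp
    set w0 : NPR.Tup p q := ⟨w0fun, hw0sum⟩ with hw0
    have hone : (⟨1, hp1⟩ : Fin p) ≠ i0 := by
      intro hh
      have := congrArg Fin.val hh
      simp [hi0def] at this
    have hne_diag : w0 ≠ NPR.diagT q := by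
      intro hcon
      have h1 : w0fun ⟨1, hp1⟩ = NPR.divP q :=
        congrFun (congrArg Subtype.val hcon) ⟨1, hp1⟩
      have h2 : w0fun ⟨1, hp1⟩ = NPR.zeroE := by
        rw [hw0f]; exact if_neg hone
      rw [h2] at h1
      have h3 : (0:ℚ) = (q:ℚ)/p := congrArg Subtype.val h1
      have h4 : (q:ℚ)/p ≠ 0 := div_ne_zero (ne_of_gt hq0) (ne_of_gt hqp0)
      exact h4 h3.symm
    obtain ⟨o0, ho0⟩ := hrepsur w0 hne_diag
    have hfw0 : (∏ i, y ((rep o0).1 i)) = y q * y NPR.zeroE ^ (p-1) := by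
      rw [NPR.prod_sameOrbit y ho0]
      rw [(Finset.mul_prod_erase Finset.univ (fun i => y (w0.1 i)) (Finset.mem_univ i0)).symm]
      have h0 : w0.1 i0 = q := by simp [hw0, hw0f]
      have hrest : (∏ i ∈ Finset.univ.erase i0, y (w0.1 i)) = y NPR.zeroE ^ (p-1) := by
        have hz : ∀ i ∈ Finset.univ.erase i0, y (w0.1 i) = y NPR.zeroE := by
          intro i hi
          have hne := (Finset.mem_erase.mp hi).1
          simp [hw0, hw0f, hne]
        rw [Finset.prod_congr rfl hz, Finset.prod_const,
          Finset.card_erase_of_mem (Finset.mem_univ i0), Finset.card_univ, Fintype.card_fin]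
      rw [h0, hrest]
    have hsplitQ := hQsum.tsum_eq_add_tsum_ite o0
    have hbound : ∀ o : Q, ‖(if o = o0 then 0 else ∏ i, y ((rep o).1 i))‖ ≤ b * b := by
      intro o
      by_cases ho : o = o0
      · rw [if_pos ho, norm_zero]; positivity
      · rw [if_neg ho]
        have hPneg : ∀ i : Fin p, ∃ j : Fin p, j ≠ i ∧ (((rep o).1 j : ℚ)) ≠ 0 := by
          by_contra hcon
          push_neg at hcon
          obtain ⟨istar, histar⟩ := hcon
          have hvistar : (rep o).1 istar = q := by
            refine Subtype.ext ?_
            have hsingle : (∑ i, (((rep o).1 i : ℚ))) = (((rep o).1 istar : ℚ)) :=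
              Finset.sum_eq_single istar (fun j _ hj => histar j hj)
                (fun h => absurd (Finset.mem_univ istar) h)
            exact hsingle.symm.trans (rep o).2
          have hvj : ∀ j, j ≠ istar → (rep o).1 j = NPR.zeroE :=
            fun j hj => Subtype.ext (histar j hj)
          have horb : NPR.sameOrbit q w0 (rep o) := by
            refine ⟨p - istar.val, ?_⟩
            refine Subtype.ext ?_
            rw [NPR.shiftT_iter_val]
            funext m
            rw [NPR.shiftF_iter]
            have hadd : ((p - istar.val : ℕ) : Fin p) + istar = 0 := by
              have h1 : ((p - istar.val : ℕ) : Fin p) + ((istar.val : ℕ) : Fin p)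
                  = ((p - istar.val + istar.val : ℕ) : Fin p) := (Nat.cast_add _ _).symm
              rw [Fin.cast_val_eq_self] at h1
              rw [h1, Nat.sub_add_cancel istar.isLt.le, Fin.natCast_self]
            have hneg : ((p - istar.val : ℕ) : Fin p) = -istar :=
              eq_neg_of_add_eq_zero_left hadd
            show w0fun (m + ((p - istar.val : ℕ) : Fin p)) = (rep o).1 m
            rw [hneg]
            by_cases hm : m = istar
            · subst hm
              rw [add_neg_cancel]
              have : w0fun 0 = q := by rw [hw0f]; exact if_pos rfl
              rw [this, hvistar]
            · have hmne : m + -istar ≠ i0 := by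
                rw [hi0def]
                intro hh
                rw [← sub_eq_add_neg, sub_eq_zero] at hh
                exact hm hh
              have : w0fun (m + -istar) = NPR.zeroE := by rw [hw0f]; exact if_neg hmne
              rw [this, hvj m hm]
          exact ho (hrepinj o o0 (NPR.sameOrbit_trans (NPR.sameOrbit_symm horb) ho0))
        obtain ⟨i₁, _, h1ne⟩ := hPneg i0
        obtain ⟨i₂, h21, h2ne⟩ := hPneg i₁
        have hpair : (((rep o).1 i₁ : ℚ)) + (((rep o).1 i₂ : ℚ)) ≤ (q:ℚ) := by
          have hsub : ({i₁, i₂} : Finset (Fin p)) ⊆ Finset.univ := Finset.subset_univ _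
          have hss := Finset.sum_le_sum_of_subset_of_nonneg hsub
            (fun i _ _ => ((rep o).1 i).2.1)
          rw [Finset.sum_pair (fun hh => h21 hh.symm)] at hss
          rwa [(rep o).2] at hss
        have h1pos : 0 < (((rep o).1 i₁ : ℚ)) :=
          lt_of_le_of_ne ((rep o).1 i₁).2.1 (Ne.symm h1ne)
        have h2pos : 0 < (((rep o).1 i₂ : ℚ)) :=
          lt_of_le_of_ne ((rep o).1 i₂).2.1 (Ne.symm h2ne)
        have h1lt : (((rep o).1 i₁ : ℚ)) < (q:ℚ) := by linarith
        have h2lt : (((rep o).1 i₂ : ℚ)) < (q:ℚ) := by linarith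
        have hmul1 : ∀ i : Fin p, (((rep o).1 i : ℚ)) < (q:ℚ) →
            (((rep o).1 i : ℚ)) * p ≠ 1 := by
          intro i hilt
          have : (((rep o).1 i : ℚ)) * p < 1 := by
            calc (((rep o).1 i : ℚ)) * p < (q:ℚ) * p :=
                  mul_lt_mul_of_pos_right hilt hqp0
            _ ≤ (p:ℚ)⁻¹ * p := mul_le_mul_of_nonneg_right hqle hqp0.le
            _ = 1 := inv_mul_cancel₀ (ne_of_gt hqp0)
          exact ne_of_lt this
        have hb1 : ‖y ((rep o).1 i₁)‖ ≤ b := hcb _ h1ne (hmul1 i₁ h1lt)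
        have hb2 : ‖y ((rep o).1 i₂)‖ ≤ b := hcb _ h2ne (hmul1 i₂ h2lt)
        rw [norm_prod]
        have hmem2 : i₂ ∈ Finset.univ.erase i₁ :=
          Finset.mem_erase.mpr ⟨h21, Finset.mem_univ _⟩
        rw [← Finset.mul_prod_erase Finset.univ (fun i => ‖y ((rep o).1 i)‖)
          (Finset.mem_univ i₁)]
        rw [← Finset.mul_prod_erase (Finset.univ.erase i₁) (fun i => ‖y ((rep o).1 i)‖) hmem2]
        have hrest1 : (∏ i ∈ (Finset.univ.erase i₁).erase i₂, ‖y ((rep o).1 i)‖) ≤ 1 :=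
          Finset.prod_le_one (fun i _ => norm_nonneg _) (fun i _ => hyle1 _)
        calc ‖y ((rep o).1 i₁)‖ * (‖y ((rep o).1 i₂)‖ *
              ∏ i ∈ (Finset.univ.erase i₁).erase i₂, ‖y ((rep o).1 i)‖)
            ≤ b * (b * 1) := by
              refine mul_le_mul hb1 ?_ (by positivity) hb0
              refine mul_le_mul hb2 hrest1 (by positivity) hb0
        _ = b * b := by ring
    have hq1 : (q:ℚ) ≠ 1 := by
      intro hh
      rw [hh] at hqle
      have : (p:ℚ)⁻¹ < 1 := inv_lt_one_of_one_lt₀ (by exact_mod_cast hp1)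
      linarith
    have hL0 : ((if (q:ℚ) = 0 then (1:C) else 0) + (if (q:ℚ) = 1 then a else 0)) = 0 := by
      rw [if_neg (ne_of_gt hq0), if_neg hq1, add_zero]
    rw [hconv q, hL0] at htsum
    rw [hsplitQ, hfw0, hdiagval] at htsum
    have hgoal_eq : y (NPR.divP q) ^ p + (p:C) * (y q * y NPR.zeroE ^ (p-1))
        = -((p:C) * ∑' o : Q, if o = o0 then 0 else ∏ i, y ((rep o).1 i)) := by
      linear_combination -htsum
    rw [hgoal_eq, norm_neg, norm_mul]
    exact mul_le_mul_of_nonneg_left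
      (NPR.my_norm_tsum_le (by positivity) hbound) (norm_nonneg _)
  -- the chain of norms at exponents 1/p^n
  have hiter : ∀ k : ℕ, ∃ e : ℕ, ((p-1) * e + p = p^(k+1)) ∧
      ‖y (NPR.invP (k+1))‖ ^ (p^(k+1)) = ‖a‖ * np ^ e := by
    intro k
    induction k with
    | zero =>
      refine ⟨0, by simp, ?_⟩
      norm_num [hinv1]
    | succ k ih =>
      obtain ⟨e, he, hg⟩ := ih
      have hq0' : (0:ℚ) < ((NPR.invP (k+1) : PadicFracExp p) : ℚ) := by
        rw [NPR.invP_coe]; positivity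
      have hqle' : ((NPR.invP (k+1) : PadicFracExp p) : ℚ) ≤ (p:ℚ)⁻¹ := by
        rw [NPR.invP_coe]
        have hinvle : (p:ℚ)⁻¹ ≤ 1 := by
          rw [inv_le_one_iff₀]; right; exact_mod_cast hp0
        calc (p:ℚ)⁻¹ ^ (k+1) ≤ (p:ℚ)⁻¹ ^ 1 :=
              pow_le_pow_of_le_one (by positivity) hinvle (by omega)
        _ = (p:ℚ)⁻¹ := pow_one _
      have hE2 := E2 _ hq0' hqle'
      rw [NPR.divP_invP] at hE2
      have hyterm : ‖(p:C) * (y (NPR.invP (k+1)) * y NPR.zeroE ^ (p-1))‖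
          = np * ‖y (NPR.invP (k+1))‖ := by
        rw [norm_mul, norm_mul, norm_pow, hynorm0, one_pow, mul_one]
      have h1e : 1 + e ≤ 2 * p^k := by
        have he' : ((p:ℤ)-1)*(e:ℤ) + (p:ℤ) = (p:ℤ)^(k+1) := by
          have := he
          zify [hp0] at this
          exact this
        have hpk : (p:ℤ)^(k+1) = (p:ℤ) * (p:ℤ)^k := by rw [pow_succ]; ring
        have ht1 : (1:ℤ) ≤ (p:ℤ)^k := one_le_pow₀ (by exact_mod_cast hp0)
        have hp2 : (2:ℤ) ≤ (p:ℤ) := by exact_mod_cast hp1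
        have key : (1:ℤ) + e ≤ 2 * (p:ℤ)^k := by nlinarith
        exact_mod_cast key
      have hbbγ : b * b < ‖y (NPR.invP (k+1))‖ := by
        have lhs_eq : (b*b)^(p^(k+1)) = np ^ (2 * p^k) := by
          calc (b*b)^(p^(k+1)) = b^(2 * p^(k+1)) := by
                rw [show b * b = b^2 by ring, ← pow_mul]
          _ = b^(p * (2 * p^k)) := by
              congr 1
              rw [pow_succ]
              ring
          _ = (b^p)^(2*p^k) := by rw [pow_mul]
          _ = np^(2*p^k) := by rw [hbp]
        have hcmp : (b*b) ^ (p^(k+1)) < ‖y (NPR.invP (k+1))‖ ^ (p^(k+1)) := by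
          rw [lhs_eq, hg]
          calc np ^ (2*p^k) ≤ np ^ (1+e) :=
                pow_le_pow_of_le_one hnp0.le hnp1.le h1e
          _ = np * np ^ e := by rw [pow_add, pow_one]
          _ < ‖a‖ * np ^ e := mul_lt_mul_of_pos_right hpa (pow_pos hnp0 e)
        by_contra hcon
        push_neg at hcon
        exact absurd hcmp (not_lt.mpr (pow_le_pow_left₀ (norm_nonneg _) hcon _))
      have hnorm_eq := NPR.my_norm_eq_of_close
        (x := y (NPR.invP (k+1+1)) ^ p)
        (y := (p:C) * (y (NPR.invP (k+1)) * y NPR.zeroE ^ (p-1)))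
        (e := np * (b*b)) hE2
        (by rw [hyterm]; exact mul_lt_mul_of_pos_left hbbγ hnp0)
      rw [hyterm, norm_pow] at hnorm_eq
      refine ⟨e + p^(k+1), ?_, ?_⟩
      · have hre : (p-1) * (e + p^(k+1)) + p = ((p-1)*e + p) + (p-1)*p^(k+1) := by ring
        rw [hre, he]
        have h1p : 1 + (p-1) = p := by omega
        calc p^(k+1) + (p-1)*p^(k+1) = (1 + (p-1)) * p^(k+1) := by ring
        _ = p * p^(k+1) := by rw [h1p]
        _ = p^(k+1+1) := by rw [pow_succ]; ring
      · calc ‖y (NPR.invP (k+1+1))‖ ^ (p^(k+1+1))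
            = (‖y (NPR.invP (k+1+1))‖ ^ p) ^ (p^(k+1)) := by
              rw [← pow_mul]
              congr 1
              rw [pow_succ]
              ring
        _ = (np * ‖y (NPR.invP (k+1))‖) ^ (p^(k+1)) := by rw [hnorm_eq]
        _ = np ^ (p^(k+1)) * ‖y (NPR.invP (k+1))‖ ^ (p^(k+1)) := mul_pow _ _ _
        _ = np ^ (p^(k+1)) * (‖a‖ * np ^ e) := by rw [hg]
        _ = ‖a‖ * np ^ (e + p^(k+1)) := by rw [pow_add]; ring
  -- final contradiction with the decay of coefficients
  have hlow : ∀ k : ℕ, np < ‖y (NPR.invP (k+1))‖ := by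
    intro k
    obtain ⟨e, he, hg⟩ := hiter k
    have hee : e ≤ (p-1)*e := Nat.le_mul_of_pos_left e (by omega)
    have h1e : 1 + e ≤ p^(k+1) := by linarith
    have hcmp : np ^ (p^(k+1)) < ‖y (NPR.invP (k+1))‖ ^ (p^(k+1)) := by
      calc np ^ (p^(k+1)) ≤ np ^ (1 + e) :=
            pow_le_pow_of_le_one hnp0.le hnp1.le h1e
      _ = np * np ^ e := by rw [pow_add, pow_one]
      _ < ‖a‖ * np ^ e := mul_lt_mul_of_pos_right hpa (pow_pos hnp0 e)
      _ = _ := hg.symm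
    by_contra hcon
    push_neg at hcon
    exact absurd hcmp (not_lt.mpr (pow_le_pow_left₀ (norm_nonneg _) hcon _))
  have hfin2 : {r : PadicFracExp p | ¬ ‖y r‖ < np}.Finite := by
    have := Metric.tendsto_nhds.mp hy np hnp0
    simpa [dist_zero_right] using this
  have hinj : Function.Injective (fun k : ℕ => (NPR.invP (k+1) : PadicFracExp p)) := by
    intro k k' h
    have hval : ((p:ℚ)⁻¹) ^ (k+1) = ((p:ℚ)⁻¹) ^ (k'+1) := by
      have := congrArg (fun r : PadicFracExp p => (r:ℚ)) h
      simpa [NPR.invP_coe] using this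
    have hinv1' : (0:ℚ) < (p:ℚ)⁻¹ := by positivity
    have hinv2 : (p:ℚ)⁻¹ < 1 := inv_lt_one_of_one_lt₀ (by exact_mod_cast hp1)
    have hmono : StrictAnti (fun n : ℕ => ((p:ℚ)⁻¹) ^ n) :=
      fun m n h => pow_lt_pow_right_of_lt_one₀ hinv1' hinv2 h
    have := hmono.injective hval
    omega
  exact Set.not_infinite.mpr hfin2 (Set.infinite_of_injective_forall_mem hinj
    (fun k => by
      simp only [Set.mem_setOf_eq]
      exact not_lt.mpr (hlow k).le))
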